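/- Let V be an N×N complex matrix and let S be an N×N complex positive semidefinite matrix with S_{ii} = 1 for all i. Then P(V,S) ≤ perm(V ∘ conj(V)) · perm(|S|), where |S| is the entrywise absolute value of S, conj(V) is the entrywise complex conjugate of V, and ∘ is the entrywise (Hadamard) product. -/

import Mathlib

open Matrix Finset
open scoped ComplexOrder

/-- The permanent of a real square matrix. -/
noncomputable def permR {N : ℕ} (M : Matrix (Fin N) (Fin N) ℝ) : ℝ :=
  ∑ τ : Equiv.Perm (Fin N), ∏ i, M i (τ i)

/-- The partially distinguishable boson-sampling transition probability. -/
noncomputable def P {N : ℕ} (V S : Matrix (Fin N) (Fin N) ℂ) : ℂ :=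
  ∑ α : Equiv.Perm (Fin N), ∑ ρ : Equiv.Perm (Fin N),
    ∏ j, V (α j) j * (starRingEnd ℂ) (V (ρ j) j) * S (ρ j) (α j)

/-- `P(V,S) ≤ perm(V ∘ conj V) · perm(|S|)`, where
`(V ∘ conj V) i j = |V i j|²` and `|S| i j = |S i j|`. -/
theorem transition_prob_le_perm_mul_permAbs (N : ℕ)
    (V S : Matrix (Fin N) (Fin N) ℂ)
    (hS : S.PosSemidef) (hS1 : ∀ i, S i i = 1) :
    P V S ≤ ((permR (Matrix.of fun i j => ‖V i j‖ ^ 2) *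
      permR (Matrix.of fun i j => ‖S i j‖) : ℝ) : ℂ) := by
  classical
  have hHerm : S.IsHermitian := hS.1
  have hconjS : ∀ i j, (starRingEnd ℂ) (S i j) = S j i := fun i j => by
    have := congrFun (congrFun hHerm j) i
    simpa [Matrix.conjTranspose_apply] using this
  have hSabs : ∀ i j, ‖S i j‖ = ‖S j i‖ := fun i j => by
    rw [← hconjS i j, Complex.norm_conj]
  set a : Equiv.Perm (Fin N) → ℝ := fun π => ∏ j, ‖V (π j) j‖ with ha
  set A : Equiv.Perm (Fin N) → ℝ := fun π => ∏ j, ‖V (π j) j‖ ^ 2 with hA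
  set s : Equiv.Perm (Fin N) → Equiv.Perm (Fin N) → ℝ :=
    fun ρ α => ∏ j, ‖S (ρ j) (α j)‖ with hs
  set c1 := permR (Matrix.of fun i j => ‖V i j‖ ^ 2) with hc1
  set c2 := permR (Matrix.of fun i j => ‖S i j‖) with hc2
  have hanonneg : ∀ π, 0 ≤ a π := fun π =>
    Finset.prod_nonneg fun j _ => norm_nonneg _
  have hsnonneg : ∀ ρ α, 0 ≤ s ρ α := fun ρ α =>
    Finset.prod_nonneg fun j _ => norm_nonneg _
  have hAa : ∀ π, A π = a π ^ 2 := fun π => by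
    simp only [hA, ha]
    exact Finset.prod_pow _ _ _
  -- L1 : for each α, summing s ρ α over ρ gives c2
  have L1 : ∀ α : Equiv.Perm (Fin N), ∑ ρ : Equiv.Perm (Fin N), s ρ α = c2 := by
    intro α
    have h1 : ∀ ρ : Equiv.Perm (Fin N),
        s ρ α = ∏ i, ‖S (ρ (α⁻¹ i)) i‖ := fun ρ => by
      simp only [hs]
      have := Equiv.prod_comp α (fun i => ‖S (ρ (α⁻¹ i)) i‖)
      simpa using this
    simp_rw [h1]
    rw [← Fintype.sum_equiv (Equiv.mulRight α)
      (fun σ : Equiv.Perm (Fin N) => ∏ i, ‖S (σ i) i‖)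
      (fun ρ : Equiv.Perm (Fin N) => ∏ i, ‖S (ρ (α⁻¹ i)) i‖)
      (fun σ => by simp [Equiv.Perm.mul_apply])]
    rw [hc2, permR]
    refine Finset.sum_congr rfl fun σ _ => Finset.prod_congr rfl fun i _ => ?_
    simp [Matrix.of_apply, hSabs (σ i) i]
  -- L2 : for each ρ, summing s ρ α over α gives c2
  have L2 : ∀ ρ : Equiv.Perm (Fin N), ∑ α : Equiv.Perm (Fin N), s ρ α = c2 := by
    intro ρ
    have : ∀ α, s ρ α = s α ρ := fun α => by
      simp only [hs]
      exact Finset.prod_congr rfl fun j _ => hSabs (ρ j) (α j)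
    simp_rw [this]
    exact L1 ρ
  -- L3 : sum of A over all permutations is c1
  have L3 : ∑ π : Equiv.Perm (Fin N), A π = c1 := by
    have h1 : ∀ π : Equiv.Perm (Fin N),
        A π = ∏ i, ‖V i (π⁻¹ i)‖ ^ 2 := fun π => by
      simp only [hA]
      have := Equiv.prod_comp π (fun i => ‖V i (π⁻¹ i)‖ ^ 2)
      simpa using this
    simp_rw [h1]
    rw [← Fintype.sum_equiv (Equiv.inv (Equiv.Perm (Fin N)))
      (fun τ : Equiv.Perm (Fin N) => ∏ i, ‖V i (τ i)‖ ^ 2)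
      (fun π : Equiv.Perm (Fin N) => ∏ i, ‖V i (π⁻¹ i)‖ ^ 2)
      (fun τ => by simp)]
    rw [hc1, permR]
    simp [Matrix.of_apply]
  -- triangle inequality bound on |P V S|
  have tri : ‖P V S‖ ≤ ∑ α : Equiv.Perm (Fin N),
      ∑ ρ : Equiv.Perm (Fin N), a α * a ρ * s ρ α := by
    refine le_trans (norm_sum_le _ _) (Finset.sum_le_sum fun α _ =>
      le_trans (norm_sum_le _ _) (Finset.sum_le_sum fun ρ _ => le_of_eq ?_))
    rw [norm_prod]
    simp_rw [norm_mul]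
    rw [Finset.prod_mul_distrib, Finset.prod_mul_distrib]
    simp [ha, hs, Complex.norm_conj]
  -- AM-GM pointwise
  have amgm : ∀ α ρ : Equiv.Perm (Fin N),
      a α * a ρ * s ρ α ≤ ((A α + A ρ) / 2) * s ρ α := by
    intro α ρ
    refine mul_le_mul_of_nonneg_right ?_ (hsnonneg ρ α)
    rw [hAa, hAa]
    nlinarith [sq_nonneg (a α - a ρ)]
  -- sum the AM-GM bound
  have key : ‖P V S‖ ≤ c1 * c2 := by
    refine le_trans tri (le_trans (Finset.sum_le_sum fun α _ =>
      Finset.sum_le_sum fun ρ _ => amgm α ρ) (le_of_eq ?_))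
    have expand : ∀ α ρ : Equiv.Perm (Fin N),
        ((A α + A ρ) / 2) * s ρ α = (A α * s ρ α) / 2 + (A ρ * s ρ α) / 2 := by
      intro α ρ; ring
    simp_rw [expand, Finset.sum_add_distrib]
    have S1 : ∑ α : Equiv.Perm (Fin N), ∑ ρ : Equiv.Perm (Fin N),
        (A α * s ρ α) / 2 = c1 * c2 / 2 := by
      have : ∀ α : Equiv.Perm (Fin N),
          ∑ ρ : Equiv.Perm (Fin N), (A α * s ρ α) / 2 = A α * c2 / 2 := fun α => by
        rw [← Finset.sum_div, ← Finset.mul_sum, L1 α]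
      simp_rw [this]
      rw [← Finset.sum_div, ← Finset.sum_mul, L3]
    have S2 : ∑ α : Equiv.Perm (Fin N), ∑ ρ : Equiv.Perm (Fin N),
        (A ρ * s ρ α) / 2 = c1 * c2 / 2 := by
      rw [Finset.sum_comm]
      have : ∀ ρ : Equiv.Perm (Fin N),
          ∑ α : Equiv.Perm (Fin N), (A ρ * s ρ α) / 2 = A ρ * c2 / 2 := fun ρ => by
        rw [← Finset.sum_div, ← Finset.mul_sum, L2 ρ]
      simp_rw [this]
      rw [← Finset.sum_div, ← Finset.sum_mul, L3]
    rw [S1, S2]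
    ring
  -- P V S is real
  have hconjP : (starRingEnd ℂ) (P V S) = P V S := by
    rw [P, map_sum]
    simp_rw [map_sum, map_prod, _root_.map_mul, Complex.conj_conj, hconjS]
    rw [Finset.sum_comm]
    refine Finset.sum_congr rfl fun α _ => Finset.sum_congr rfl fun ρ _ =>
      Finset.prod_congr rfl fun j _ => ?_
    ring
  have him : (P V S).im = 0 := Complex.conj_eq_iff_im.mp hconjP
  have hre : P V S = ((P V S).re : ℂ) := Complex.ext (by simp) (by simp [him])
  rw [hre]
  have : (P V S).re ≤ c1 * c2 := le_trans (Complex.re_le_norm _) key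
  exact_mod_cast this
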